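/- Let E be a complete normed space and f : [a,b] → E. Define the semivariation A(f, δ) = sup ‖∑_j c_j (f(t_j) - f(t_{j-1}))‖ over all finite partitions a = t₀ < ⋯ < t_n = b and all coefficients |c_j| ≤ δ. If lim_{δ→0} A(f, δ) = 0, then for every φ ∈ D⁻[a,b] the Riemann integral ∫_a^b φ(t) f(t) dt exists (i.e., f ∈ 𝓡_m([a,b], E)). -/

import Mathlib

/-- `f` has Riemann integral `I` over `[a,b]`: Riemann sums over tagged partitions
converge to `I` as the mesh tends to `0`. -/
def HasRiemannIntegral {E : Type*} [NormedAddCommGroup E] [NormedSpace ℝ E]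
    (f : ℝ → E) (a b : ℝ) (I : E) : Prop :=
  ∀ ε : ℝ, 0 < ε → ∃ δ : ℝ, 0 < δ ∧ ∀ (n : ℕ) (t ξ : ℕ → ℝ),
    0 < n → t 0 = a → t n = b →
    (∀ i < n, t i < t (i + 1)) →
    (∀ i < n, t (i + 1) - t i < δ) →
    (∀ i < n, ξ i ∈ Set.Icc (t i) (t (i + 1))) →
    ‖(∑ i ∈ Finset.range n, (t (i + 1) - t i) • f (ξ i)) - I‖ < ε

/-- `φ ∈ D⁻[a,b]`: left-continuous on `(a,b]` with right-hand limits on `[a,b)`. -/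
def MemDminus (a b : ℝ) (φ : ℝ → ℝ) : Prop :=
  (∀ x ∈ Set.Ioc a b, Filter.Tendsto φ (nhdsWithin x (Set.Iio x)) (nhds (φ x))) ∧
  (∀ x ∈ Set.Ico a b, ∃ L : ℝ, Filter.Tendsto φ (nhdsWithin x (Set.Ioi x)) (nhds L))

open Finset Set

namespace RIhelp


/-- monotonicity of a partition from successive increase -/
lemma part_mono {t : ℕ → ℝ} {n : ℕ} (h : ∀ i < n, t i < t (i+1)) :
    ∀ i j, i ≤ j → j ≤ n → t i ≤ t j := by
  intro i j hij hjn
  induction j with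
  | zero => simp_all
  | succ k ih =>
    rcases Nat.eq_or_lt_of_le hij with rfl | hlt
    · exact le_refl _
    · exact le_trans (ih (Nat.lt_succ_iff.mp hlt) (by omega))
        (le_of_lt (h k (Nat.lt_of_succ_le hjn)))

lemma part_strict {t : ℕ → ℝ} {n : ℕ} (h : ∀ i < n, t i < t (i+1)) :
    ∀ i j, i < j → j ≤ n → t i < t j := by
  intro i j hij hjn
  have h1 : t i ≤ t (j-1) := part_mono h i (j-1) (by omega) (by omega)
  have h2 : t (j-1) < t j := by
    have := h (j-1) (by omega)
    simpa [Nat.sub_add_cancel (by omega : 1 ≤ j)] using this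
  linarith

/-- clamp identity -/
lemma clamp_sub {p q x y : ℝ} (hpq : p ≤ q) (hxy : x ≤ y) :
    max 0 (min q y - max p x) = max p (min q y) - max p (min q x) := by
  rcases le_total y q with h1 | h1 <;> rcases le_total x p with h2 | h2 <;>
    rcases le_total x q with h3 | h3 <;> rcases le_total y p with h4 | h4 <;>
    simp [max_def, min_def] <;> split_ifs <;> linarith

/-- telescoping sum of clipped lengths over a partition -/
lemma sum_clip {t : ℕ → ℝ} {n : ℕ} {a b p q : ℝ}
    (h0 : t 0 = a) (hn : t n = b) (h : ∀ i < n, t i < t (i+1))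
    (hap : a ≤ p) (hqb : q ≤ b) :
    ∑ j ∈ range n, max 0 (min q (t (j+1)) - max p (t j)) = max 0 (q - p) := by
  rcases le_total p q with hpq | hpq
  · have key : ∀ j ∈ range n, max 0 (min q (t (j+1)) - max p (t j))
        = max p (min q (t (j+1))) - max p (min q (t j)) := by
      intro j hj
      exact clamp_sub hpq (le_of_lt (h j (mem_range.mp hj)))
    rw [Finset.sum_congr rfl key, Finset.sum_range_sub (fun j => max p (min q (t j)))]
    rw [h0, hn]
    rw [min_eq_left hqb, min_eq_right (le_trans hap hpq), max_eq_right hpq,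
      max_eq_left hap]
    exact (max_eq_right (by linarith)).symm
  · have key : ∀ j ∈ range n, max 0 (min q (t (j+1)) - max p (t j)) = 0 := by
      intro j hj
      have := h j (mem_range.mp hj)
      have h1 : min q (t (j+1)) ≤ q := min_le_left _ _
      have h2 : p ≤ max p (t j) := le_max_left _ _
      exact max_eq_left (by linarith)
    rw [Finset.sum_congr rfl key, Finset.sum_const, smul_zero]
    exact (max_eq_left (by linarith)).symm

/-- a sum of nonneg terms, with at most one nonzero term each ≤ δ, is ≤ δ -/
lemma sum_le_of_unique_nonzero {n : ℕ} {g : ℕ → ℝ} {δ : ℝ} (hδ : 0 ≤ δ)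
    (h1 : ∀ j < n, g j ≤ δ)
    (huniq : ∀ i < n, ∀ j < n, g i ≠ 0 → g j ≠ 0 → i = j) :
    ∑ j ∈ range n, g j ≤ δ := by
  by_cases hex : ∃ i ∈ range n, g i ≠ 0
  · obtain ⟨i, hi, hgi⟩ := hex
    rw [Finset.sum_eq_single_of_mem i hi (fun j hj hji => by
      by_contra hgj
      exact hji (huniq j (mem_range.mp hj) i (mem_range.mp hi) hgj hgi))]
    exact h1 i (mem_range.mp hi)
  · push_neg at hex
    rw [Finset.sum_congr rfl (fun j hj => hex j hj)]
    simpa using hδ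

/-- a finset of naturals whose elements pairwise differ by at most one has card ≤ 2 -/
lemma card_le_two {s : Finset ℕ} (h : ∀ x ∈ s, ∀ y ∈ s, x ≤ y → y ≤ x + 1) :
    s.card ≤ 2 := by
  rcases s.eq_empty_or_nonempty with rfl | hne
  · simp
  · have hsub : s ⊆ Finset.Icc (s.min' hne) (s.min' hne + 1) := by
      intro y hy
      rw [Finset.mem_Icc]
      exact ⟨s.min'_le y hy, h _ (s.min'_mem hne) y hy (s.min'_le y hy)⟩
    calc s.card ≤ (Finset.Icc (s.min' hne) (s.min' hne + 1)).card := Finset.card_le_card hsub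
    _ ≤ 2 := by rw [Nat.card_Icc]; omega



/-- there is a chain of small-oscillation intervals from `a` to `x` -/
def Chain (φ : ℝ → ℝ) (a ε x : ℝ) : Prop :=
  ∃ m : ℕ, ∃ u : ℕ → ℝ, u 0 = a ∧ u m = x ∧ (∀ k < m, u k < u (k+1)) ∧
    (∀ k < m, ∀ p ∈ Ioo (u k) (u (k+1)), ∀ q ∈ Ioo (u k) (u (k+1)), |φ p - φ q| ≤ ε)

lemma chain_extend {φ : ℝ → ℝ} {a ε x y : ℝ} (hc : Chain φ a ε x) (hxy : x < y)
    (hosc : ∀ p ∈ Ioo x y, ∀ q ∈ Ioo x y, |φ p - φ q| ≤ ε) : Chain φ a ε y := by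
  obtain ⟨m, u, h0, hm, hstep, hoscu⟩ := hc
  refine ⟨m + 1, fun k => if k ≤ m then u k else y, by simpa using h0, by simp, ?_, ?_⟩
  · intro k hk
    rcases Nat.lt_or_ge k m with h | h
    · simpa [Nat.le_of_lt h, Nat.succ_le_of_lt h] using hstep k h
    · have hkm : k = m := by omega
      subst hkm
      simpa [hm, Nat.not_succ_le_self] using hxy
  · intro k hk p hp q hq
    rcases Nat.lt_or_ge k m with h | h
    · rw [Set.mem_Ioo] at hp hq
      simp only [Nat.le_of_lt h, Nat.succ_le_of_lt h, if_true] at hp hq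
      exact hoscu k h p (Set.mem_Ioo.mpr hp) q (Set.mem_Ioo.mpr hq)
    · have hkm : k = m := by omega
      subst hkm
      simp only [Set.mem_Ioo] at hp hq
      simp only [le_refl, if_true, Nat.not_succ_le_self, if_false, hm] at hp hq
      exact hosc p (Set.mem_Ioo.mpr hp) q (Set.mem_Ioo.mpr hq)

lemma right_osc {a b : ℝ} {φ : ℝ → ℝ} (hφ : MemDminus a b φ) {x : ℝ} {ε : ℝ}
    (hε : 0 < ε) (hx : x ∈ Ico a b) :
    ∃ y ∈ Ioc x b, ∀ p ∈ Ioo x y, ∀ q ∈ Ioo x y, |φ p - φ q| ≤ ε := by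
  obtain ⟨L, hL⟩ := hφ.2 x hx
  obtain ⟨δ, hδ, hd⟩ := Metric.tendsto_nhdsWithin_nhds.mp hL (ε/2) (by linarith)
  refine ⟨min (x + δ) b, ⟨lt_min (by linarith) hx.2, min_le_right _ _⟩, ?_⟩
  intro p hp q hq
  have hpL : dist (φ p) L < ε/2 := hd hp.1 (by
    rw [Real.dist_eq, abs_of_pos (by linarith [hp.1] : (0:ℝ) < p - x)]
    have := hp.2; have := lt_min_iff.mp (lt_of_lt_of_le hp.2 (le_refl _))
    have h2 : p < x + δ := lt_of_lt_of_le hp.2 (min_le_left _ _)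
    linarith)
  have hqL : dist (φ q) L < ε/2 := hd hq.1 (by
    rw [Real.dist_eq, abs_of_pos (by linarith [hq.1] : (0:ℝ) < q - x)]
    have h2 : q < x + δ := lt_of_lt_of_le hq.2 (min_le_left _ _)
    linarith)
  rw [Real.dist_eq] at hpL hqL
  calc |φ p - φ q| ≤ |φ p - L| + |L - φ q| := abs_sub_le _ _ _
  _ = |φ p - L| + |φ q - L| := by rw [abs_sub_comm L]
  _ ≤ ε := by linarith

lemma osc_partition {a b : ℝ} (hab : a < b) {φ : ℝ → ℝ} (hφ : MemDminus a b φ)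
    {ε : ℝ} (hε : 0 < ε) :
    ∃ m : ℕ, ∃ u : ℕ → ℝ, 0 < m ∧ u 0 = a ∧ u m = b ∧ (∀ k < m, u k < u (k+1)) ∧
      (∀ k < m, ∀ p ∈ Ioo (u k) (u (k+1)), ∀ q ∈ Ioo (u k) (u (k+1)), |φ p - φ q| ≤ ε) := by
  let S := {x : ℝ | x ∈ Icc a b ∧ Chain φ a ε x}
  have haS : a ∈ S := ⟨⟨le_refl a, le_of_lt hab⟩, 0, fun _ => a, rfl, rfl, by omega, by omega⟩
  have hne : S.Nonempty := ⟨a, haS⟩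
  have hbdd : BddAbove S := ⟨b, fun x hx => hx.1.2⟩
  let c := sSup S
  have hac : a ≤ c := le_csSup hbdd haS
  have hcb : c ≤ b := csSup_le hne (fun x hx => hx.1.2)
  have hcS : Chain φ a ε c := by
    rcases eq_or_lt_of_le hac with heq | hlt
    · exact heq ▸ haS.2
    · obtain ⟨δ, hδ, hd⟩ := Metric.tendsto_nhdsWithin_nhds.mp (hφ.1 c ⟨hlt, hcb⟩) (ε/2)
        (by linarith)
      obtain ⟨x, hxS, hxgt⟩ := exists_lt_of_lt_csSup hne
        (show max a (c - δ) < c from max_lt hlt (by linarith))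
      have hxc : x ≤ c := le_csSup hbdd hxS
      rcases eq_or_lt_of_le hxc with rfl | hxlt
      · exact hxS.2
      · refine chain_extend hxS.2 hxlt ?_
        intro p hp q hq
        have hkey : ∀ z ∈ Ioo x c, |φ z - φ c| < ε/2 := by
          intro z hz
          have := hd (Set.mem_Iio.mpr hz.2) (by
            rw [Real.dist_eq, abs_of_neg (by linarith [hz.2] : z - c < 0)]
            have : max a (c - δ) < z := lt_trans hxgt hz.1
            have := le_max_right a (c - δ)
            linarith)
          rwa [Real.dist_eq] at this
        have h1 := hkey p hp
        have h2 := hkey q hq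
        calc |φ p - φ q| = |(φ p - φ c) - (φ q - φ c)| := by ring_nf
        _ ≤ |φ p - φ c| + |φ q - φ c| := abs_sub _ _
        _ ≤ ε := by linarith
  have hcb2 : c = b := by
    by_contra hne2
    have hclt : c < b := lt_of_le_of_ne hcb hne2
    obtain ⟨y, hy, hosc⟩ := right_osc hφ hε ⟨hac, hclt⟩
    have : y ∈ S := ⟨⟨le_trans hac (le_of_lt hy.1), hy.2⟩, chain_extend hcS hy.1 hosc⟩
    exact absurd (le_csSup hbdd this) (not_le.mpr hy.1)
  obtain ⟨m, u, h0, hm, hstep, hoscu⟩ := hcb2 ▸ hcS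
  have hm0 : 0 < m := by
    rcases Nat.eq_zero_or_pos m with rfl | h
    · rw [h0] at hm; exact absurd hm (ne_of_lt hab)
    · exact h
  exact ⟨m, u, hm0, h0, hm, hstep, hoscu⟩


/-- locate a point of `[a,b]` relative to a partition -/
lemma locate {a b : ℝ} {u : ℕ → ℝ} {m : ℕ} (h0 : u 0 = a) (hm : u m = b)
    (hstep : ∀ k < m, u k < u (k+1)) {x : ℝ} (hx : x ∈ Icc a b) :
    (∃ k ≤ m, x = u k) ∨ (∃ k < m, x ∈ Ioo (u k) (u (k+1))) := by
  classical
  set k₀ := Nat.findGreatest (fun k => u k ≤ x) m with hk₀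
  have hP0 : u 0 ≤ x := h0 ▸ hx.1
  have hspec : u k₀ ≤ x :=
    Nat.findGreatest_spec (P := fun k => u k ≤ x) (Nat.zero_le m) hP0
  have hk₀m : k₀ ≤ m := Nat.findGreatest_le m
  rcases eq_or_lt_of_le hspec with heq | hlt
  · exact Or.inl ⟨k₀, hk₀m, heq.symm⟩
  · rcases eq_or_lt_of_le hk₀m with heqm | hltm
    · exfalso
      rw [heqm, hm] at hlt
      exact absurd hx.2 (not_le.mpr hlt)
    · have hmax : ¬ u (k₀ + 1) ≤ x :=
        Nat.findGreatest_is_greatest (Nat.lt_succ_self k₀) hltm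
      exact Or.inr ⟨k₀, hltm, hlt, not_le.mp hmax⟩

/-- a function in `D⁻[a,b]` is bounded on `[a,b]` -/
lemma bounded_of_Dminus {a b : ℝ} (hab : a < b) {φ : ℝ → ℝ} (hφ : MemDminus a b φ) :
    ∃ M : ℝ, 0 ≤ M ∧ ∀ x ∈ Icc a b, |φ x| ≤ M := by
  obtain ⟨m, u, hm0, h0, hm, hstep, hosc⟩ := osc_partition hab hφ (by norm_num : (0:ℝ) < 1)
  refine ⟨(∑ k ∈ range (m+1), |φ (u k)|) + (∑ k ∈ range m, |φ ((u k + u (k+1))/2)|) + 1,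
    by positivity, ?_⟩
  intro x hx
  have hnn1 : (0:ℝ) ≤ ∑ k ∈ range (m+1), |φ (u k)| := Finset.sum_nonneg fun _ _ => abs_nonneg _
  have hnn2 : (0:ℝ) ≤ ∑ k ∈ range m, |φ ((u k + u (k+1))/2)| :=
    Finset.sum_nonneg fun _ _ => abs_nonneg _
  rcases locate h0 hm hstep hx with ⟨k, hk, rfl⟩ | ⟨k, hk, hxIoo⟩
  · have : |φ (u k)| ≤ ∑ k ∈ range (m+1), |φ (u k)| :=
      Finset.single_le_sum (f := fun i => |φ (u i)|) (fun i _ => abs_nonneg _) (mem_range.mpr (Nat.lt_succ_of_le hk))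
    linarith
  · have hvIoo : (u k + u (k+1))/2 ∈ Ioo (u k) (u (k+1)) :=
      ⟨by linarith [hstep k hk], by linarith [hstep k hk]⟩
    have h1 : |φ x - φ ((u k + u (k+1))/2)| ≤ 1 := hosc k hk x hxIoo _ hvIoo
    have h2 : |φ ((u k + u (k+1))/2)| ≤ ∑ k ∈ range m, |φ ((u k + u (k+1))/2)| :=
      Finset.single_le_sum (f := fun i => |φ ((u i + u (i+1))/2)|)
        (fun i _ => abs_nonneg _) (mem_range.mpr hk)
    have h3 : |φ x| ≤ |φ x - φ ((u k + u (k+1))/2)| + |φ ((u k + u (k+1))/2)| := by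
      calc |φ x| = |(φ x - φ ((u k + u (k+1))/2)) + φ ((u k + u (k+1))/2)| := by ring_nf
      _ ≤ _ := abs_add_le _ _
    linarith

/-- the weighted tail Riemann sum -/
noncomputable def cP (φ : ℝ → ℝ) (n : ℕ) (t ξ : ℕ → ℝ) (s : ℝ) : ℝ :=
  ∑ j ∈ range n, if s ≤ ξ j then φ (ξ j) * (t (j+1) - t j) else 0

/-- the comparator: the integral of a step approximation of `φ` over `(s,b)` -/
noncomputable def Psi (φ : ℝ → ℝ) (m : ℕ) (u : ℕ → ℝ) (s : ℝ) : ℝ :=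
  ∑ k ∈ range m, φ ((u k + u (k+1))/2) * max 0 (u (k+1) - max (u k) s)

lemma max3_comm (x y z : ℝ) : max (max x y) z = max (max z y) x := by
  rcases le_total x y with h1 | h1 <;> rcases le_total y z with h2 | h2 <;>
    rcases le_total x z with h3 | h3 <;>
    simp [max_def] <;> split_ifs <;> linarith

/-- The key estimate: a weighted tail Riemann sum of a fine tagged partition is
close to the comparator `Psi`, uniformly in the cut point `s`. -/
lemma cP_close {a b : ℝ} {φ : ℝ → ℝ} {ε Mb δ : ℝ} (hε : 0 < ε) (hM : 0 ≤ Mb) (hδ : 0 < δ)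
    (hMb : ∀ x ∈ Icc a b, |φ x| ≤ Mb)
    {m : ℕ} {u : ℕ → ℝ} (hu0 : u 0 = a) (hum : u m = b) (hustep : ∀ k < m, u k < u (k+1))
    (hosc : ∀ k < m, ∀ p ∈ Ioo (u k) (u (k+1)), ∀ q ∈ Ioo (u k) (u (k+1)), |φ p - φ q| ≤ ε)
    {n : ℕ} {t ξ : ℕ → ℝ} (ht0 : t 0 = a) (htn : t n = b) (htstep : ∀ j < n, t j < t (j+1))
    (hmesh : ∀ j < n, t (j+1) - t j < δ) (htag : ∀ j < n, ξ j ∈ Icc (t j) (t (j+1)))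
    (s : ℝ) :
    |cP φ n t ξ s - Psi φ m u s| ≤ ε * (b - a) + Mb * δ * (4 * m + 5) := by
  classical
  set v : ℕ → ℝ := fun k => (u k + u (k+1))/2 with hv
  set Mjk : ℕ → ℕ → ℝ := fun j k =>
    max 0 (min (t (j+1)) (u (k+1)) - max (max (t j) s) (u k)) with hMjk
  set ell : ℕ → ℝ := fun j => max 0 (t (j+1) - max (t j) s) with hell
  set ind : ℕ → ℝ := fun j => if s ≤ ξ j then t (j+1) - t j else 0 with hind
  -- basic inclusions
  have ht_in : ∀ j ≤ n, t j ∈ Icc a b := fun j hj =>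
    ⟨ht0 ▸ part_mono htstep 0 j (Nat.zero_le j) hj, htn ▸ part_mono htstep j n hj le_rfl⟩
  have hu_in : ∀ k ≤ m, u k ∈ Icc a b := fun k hk =>
    ⟨hu0 ▸ part_mono hustep 0 k (Nat.zero_le k) hk, hum ▸ part_mono hustep k m hk le_rfl⟩
  have hξ_in : ∀ j < n, ξ j ∈ Icc a b := fun j hj =>
    ⟨le_trans (ht_in j (le_of_lt hj)).1 (htag j hj).1,
     le_trans (htag j hj).2 (ht_in (j+1) hj).2⟩
  have hv_in : ∀ k < m, v k ∈ Ioo (u k) (u (k+1)) := fun k hk =>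
    ⟨by simp only [hv]; linarith [hustep k hk], by simp only [hv]; linarith [hustep k hk]⟩
  have hΔnn : ∀ j < n, (0:ℝ) ≤ t (j+1) - t j := fun j hj => by linarith [htstep j hj]
  have hMjknn : ∀ j k, 0 ≤ Mjk j k := fun j k => le_max_left _ _
  have hellnn : ∀ j, 0 ≤ ell j := fun j => le_max_left _ _
  have hell_le : ∀ j < n, ell j ≤ t (j+1) - t j := by
    intro j hj
    have : t (j+1) - max (t j) s ≤ t (j+1) - t j := by
      have := le_max_left (t j) s; linarith
    exact max_le (hΔnn j hj) this
  have hind_mem : ∀ j < n, 0 ≤ ind j ∧ ind j ≤ t (j+1) - t j := by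
    intro j hj
    simp only [hind]
    split_ifs <;> constructor <;> first | exact le_rfl | linarith [hΔnn j hj]
  -- F1 : row sums of Mjk
  have F1 : ∀ j < n, ∑ k ∈ range m, Mjk j k = ell j := by
    intro j hj
    have := sum_clip (t := u) (n := m) hu0 hum hustep
      (p := max (t j) s) (q := t (j+1))
      (le_trans (ht_in j (le_of_lt hj)).1 (le_max_left _ _)) ((ht_in (j+1) hj).2)
    exact this
  -- F2 : column sums of Mjk
  have F2 : ∀ k < m, ∑ j ∈ range n, Mjk j k = max 0 (u (k+1) - max (u k) s) := by
    intro k hk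
    have hsc := sum_clip (t := t) (n := n) ht0 htn htstep
      (p := max (u k) s) (q := u (k+1))
      (le_trans (hu_in k (le_of_lt hk)).1 (le_max_left _ _)) ((hu_in (k+1) hk).2)
    rw [← hsc]
    refine Finset.sum_congr rfl fun j _ => ?_
    simp only [hMjk]
    rw [min_comm, max3_comm (t j) s (u k), max_comm (u k) s]
  -- rewrite Psi as a double sum
  have Psi_eq : Psi φ m u s = ∑ j ∈ range n, ∑ k ∈ range m, φ (v k) * Mjk j k := by
    rw [Finset.sum_comm]
    refine Finset.sum_congr rfl fun k hk => ?_
    rw [← Finset.mul_sum, F2 k (mem_range.mp hk)]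
  -- rewrite cP
  have cP_eq : cP φ n t ξ s = ∑ j ∈ range n, φ (ξ j) * ind j := by
    refine Finset.sum_congr rfl fun j _ => ?_
    simp only [hind]
    split_ifs <;> simp
  -- main split
  have split : cP φ n t ξ s - Psi φ m u s =
      (∑ j ∈ range n, φ (ξ j) * (ind j - ell j)) +
      (∑ j ∈ range n, ∑ k ∈ range m, (φ (ξ j) - φ (v k)) * Mjk j k) := by
    rw [cP_eq, Psi_eq, ← Finset.sum_sub_distrib, ← Finset.sum_add_distrib]
    refine Finset.sum_congr rfl fun j hj => ?_
    have h1 : ∑ k ∈ range m, (φ (ξ j) - φ (v k)) * Mjk j k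
        = φ (ξ j) * ell j - ∑ k ∈ range m, φ (v k) * Mjk j k := by
      rw [← F1 j (mem_range.mp hj), Finset.mul_sum, ← Finset.sum_sub_distrib]
      exact Finset.sum_congr rfl fun k _ => by ring
    rw [h1]; ring
  -- bound on term 1
  have T1 : |∑ j ∈ range n, φ (ξ j) * (ind j - ell j)| ≤ Mb * δ := by
    calc |∑ j ∈ range n, φ (ξ j) * (ind j - ell j)|
        ≤ ∑ j ∈ range n, |φ (ξ j) * (ind j - ell j)| := Finset.abs_sum_le_sum_abs _ _
      _ ≤ ∑ j ∈ range n, Mb * |ind j - ell j| := by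
          refine Finset.sum_le_sum fun j hj => ?_
          rw [abs_mul]
          exact mul_le_mul_of_nonneg_right (hMb _ (hξ_in j (mem_range.mp hj))) (abs_nonneg _)
      _ = Mb * ∑ j ∈ range n, |ind j - ell j| := by rw [Finset.mul_sum]
      _ ≤ Mb * δ := by
          refine mul_le_mul_of_nonneg_left ?_ hM
          refine sum_le_of_unique_nonzero (le_of_lt hδ) ?_ ?_
          · intro j hj
            have h1 := hind_mem j hj
            have h2 := hell_le j hj
            have h3 := hellnn j
            have h4 := hmesh j hj
            rw [abs_le]; constructor <;> linarith
          · intro i hi j hj hgi hgj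
            have key : ∀ l, l < n → |ind l - ell l| ≠ 0 → t l < s ∧ s ≤ t (l+1) := by
              intro l hl hne
              by_contra hcon
              push_neg at hcon
              rcases le_or_gt s (t l) with hsl | hsl
              · apply hne
                have hi1 : ind l = t (l+1) - t l := by
                  simp only [hind]
                  rw [if_pos (le_trans hsl (htag l hl).1)]
                have he1 : ell l = t (l+1) - t l := by
                  simp only [hell]
                  rw [max_eq_left hsl, max_eq_right (hΔnn l hl)]
                rw [hi1, he1, sub_self, abs_zero]
              · have hst : t (l+1) < s := hcon hsl
                apply hne
                have hi1 : ind l = 0 := by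
                  simp only [hind]
                  rw [if_neg (by push_neg; exact lt_of_le_of_lt (htag l hl).2 hst)]
                have he1 : ell l = 0 := by
                  simp only [hell]
                  have hmax : max (t l) s = s :=
                    max_eq_right (le_of_lt (lt_trans (htstep l hl) hst))
                  rw [hmax, max_eq_left (by linarith)]
                rw [hi1, he1, sub_self, abs_zero]
            obtain ⟨hi1, hi2⟩ := key i hi hgi
            obtain ⟨hj1, hj2⟩ := key j hj hgj
            by_contra hne
            rcases Nat.lt_or_ge i j with hij | hij
            · have : t (i+1) ≤ t j := part_mono htstep (i+1) j hij (le_of_lt hj)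
              linarith
            · have hji : j < i := by omega
              have : t (j+1) ≤ t i := part_mono htstep (j+1) i hji (le_of_lt hi)
              linarith
  -- the set of bad indices
  set Bad : Finset ℕ := (range n).filter (fun j => ∃ k ≤ m, t j ≤ u k ∧ u k ≤ t (j+1))
    with hBad
  have hBadcard : Bad.card ≤ 2 * (m + 1) := by
    have hsub : Bad ⊆ (range (m+1)).biUnion
        (fun k => (range n).filter (fun j => t j ≤ u k ∧ u k ≤ t (j+1))) := by
      intro j hj
      rw [hBad, Finset.mem_filter] at hj
      obtain ⟨k, hk, h1, h2⟩ := hj.2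
      exact Finset.mem_biUnion.mpr ⟨k, mem_range.mpr (Nat.lt_succ_of_le hk),
        Finset.mem_filter.mpr ⟨hj.1, h1, h2⟩⟩
    calc Bad.card ≤ _ := Finset.card_le_card hsub
      _ ≤ ∑ k ∈ range (m+1),
          ((range n).filter (fun j => t j ≤ u k ∧ u k ≤ t (j+1))).card :=
        Finset.card_biUnion_le
      _ ≤ ∑ _k ∈ range (m+1), 2 := by
        refine Finset.sum_le_sum fun k _ => ?_
        refine card_le_two fun x hx y hy hxy => ?_
        rw [Finset.mem_filter, Finset.mem_range] at hx hy
        by_contra hc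
        push_neg at hc
        have h2 : x + 1 < y := by omega
        have := part_strict htstep (x+1) y h2 (le_of_lt hy.1)
        linarith [hx.2.2, hy.2.1]
      _ = 2 * (m+1) := by rw [Finset.sum_const, card_range]; ring
  -- bound on term 2
  have T2 : |∑ j ∈ range n, ∑ k ∈ range m, (φ (ξ j) - φ (v k)) * Mjk j k|
      ≤ ε * (b - a) + 2 * Mb * δ * (2 * (m + 1)) := by
    have perj : ∀ j ∈ range n, |∑ k ∈ range m, (φ (ξ j) - φ (v k)) * Mjk j k|
        ≤ ε * (t (j+1) - t j) + (if j ∈ Bad then 2 * Mb * δ else 0) := by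
      intro j hjr
      have hj := mem_range.mp hjr
      by_cases hjb : j ∈ Bad
      · rw [if_pos hjb]
        have h1 : |∑ k ∈ range m, (φ (ξ j) - φ (v k)) * Mjk j k|
            ≤ ∑ k ∈ range m, (2 * Mb) * Mjk j k := by
          refine le_trans (Finset.abs_sum_le_sum_abs _ _) (Finset.sum_le_sum fun k hk => ?_)
          rw [abs_mul, abs_of_nonneg (hMjknn j k)]
          refine mul_le_mul_of_nonneg_right ?_ (hMjknn j k)
          have hk' := mem_range.mp hk
          have hvi : v k ∈ Icc a b := ⟨le_trans (hu_in k (le_of_lt hk')).1 (hv_in k hk').1.le,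
            le_trans (hv_in k hk').2.le (hu_in (k+1) hk').2⟩
          calc |φ (ξ j) - φ (v k)| ≤ |φ (ξ j)| + |φ (v k)| := abs_sub _ _
            _ ≤ Mb + Mb := add_le_add (hMb _ (hξ_in j hj)) (hMb _ hvi)
            _ = 2 * Mb := by ring
        have h2 : ∑ k ∈ range m, (2 * Mb) * Mjk j k = 2 * Mb * ell j := by
          rw [← Finset.mul_sum, F1 j hj]
        have h3 : 2 * Mb * ell j ≤ 2 * Mb * δ := by
          refine mul_le_mul_of_nonneg_left ?_ (by linarith)
          linarith [hell_le j hj, hmesh j hj]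
        have h4 : (0:ℝ) ≤ ε * (t (j+1) - t j) :=
          mul_nonneg (le_of_lt hε) (hΔnn j hj)
        linarith [le_trans h1 (le_of_eq h2)]
      · rw [if_neg hjb, add_zero]
        rw [hBad, Finset.mem_filter] at hjb
        have hnotk : ¬ ∃ k ≤ m, t j ≤ u k ∧ u k ≤ t (j+1) := fun hex => hjb ⟨hjr, hex⟩
        -- t j is not a partition point of u
        have hloc := locate hu0 hum hustep (ht_in j (le_of_lt hj))
        rcases hloc with ⟨k, hk, heq⟩ | ⟨k, hk, hIoo⟩
        · exact absurd ⟨k, hk, heq.le, le_trans heq.ge (le_of_lt (htstep j hj))⟩ hnotk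
        · -- the whole interval is inside (u k, u (k+1))
          have ht1 : t (j+1) < u (k+1) := by
            by_contra hcon
            push_neg at hcon
            exact hnotk ⟨k+1, Nat.succ_le_of_lt hk, le_of_lt hIoo.2, hcon⟩
          have hMzero : ∀ k' ∈ range m, k' ≠ k → Mjk j k' = 0 := by
            intro k' hk' hne
            have hk'' := mem_range.mp hk'
            simp only [hMjk]
            rcases Nat.lt_or_ge k' k with hlt | hge
            · have : u (k'+1) ≤ u k := part_mono hustep (k'+1) k hlt (le_of_lt hk)
              have h1 : min (t (j+1)) (u (k'+1)) ≤ u (k'+1) := min_le_right _ _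
              have h2 : t j ≤ max (max (t j) s) (u k') :=
                le_trans (le_max_left _ _) (le_max_left _ _)
              exact max_eq_left (by linarith [hIoo.1])
            · have hgt : k < k' := by omega
              have : u (k+1) ≤ u k' := part_mono hustep (k+1) k' hgt (le_of_lt hk'')
              have h1 : min (t (j+1)) (u (k'+1)) ≤ t (j+1) := min_le_left _ _
              have h2 : u k' ≤ max (max (t j) s) (u k') := le_max_right _ _
              exact max_eq_left (by linarith)
          rw [Finset.sum_eq_single_of_mem k (mem_range.mpr hk)
            (fun k' hk' hne => by rw [hMzero k' hk' hne, mul_zero])]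
          have hξIoo : ξ j ∈ Ioo (u k) (u (k+1)) :=
            ⟨lt_of_lt_of_le hIoo.1 (htag j hj).1, lt_of_le_of_lt (htag j hj).2 ht1⟩
          have hoscb : |φ (ξ j) - φ (v k)| ≤ ε := hosc k hk _ hξIoo _ (hv_in k hk)
          have hMle : Mjk j k ≤ t (j+1) - t j := by
            have h1 : Mjk j k ≤ ∑ k' ∈ range m, Mjk j k' :=
              Finset.single_le_sum (f := fun k' => Mjk j k') (fun k' _ => hMjknn j k')
                (mem_range.mpr hk)
            rw [F1 j hj] at h1
            linarith [hell_le j hj]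
          rw [abs_mul, abs_of_nonneg (hMjknn j k)]
          exact mul_le_mul hoscb hMle (hMjknn j k) (le_of_lt hε)
    calc |∑ j ∈ range n, ∑ k ∈ range m, (φ (ξ j) - φ (v k)) * Mjk j k|
        ≤ ∑ j ∈ range n, |∑ k ∈ range m, (φ (ξ j) - φ (v k)) * Mjk j k| :=
          Finset.abs_sum_le_sum_abs _ _
      _ ≤ ∑ j ∈ range n, (ε * (t (j+1) - t j) + (if j ∈ Bad then 2 * Mb * δ else 0)) :=
          Finset.sum_le_sum perj
      _ = ε * (b - a) + (2 * Mb * δ) * Bad.card := by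
          rw [Finset.sum_add_distrib, ← Finset.mul_sum,
            Finset.sum_range_sub (fun j => t j), ht0, htn]
          congr 1
          rw [Finset.sum_ite_mem, Finset.inter_eq_right.mpr
            (fun j hj => (Finset.mem_filter.mp hj).1), Finset.sum_const]
          rw [nsmul_eq_mul, mul_comm]
      _ ≤ ε * (b - a) + 2 * Mb * δ * (2 * (m + 1)) := by
          have hc : (Bad.card : ℝ) ≤ 2 * (m+1) := by exact_mod_cast hBadcard
          have : (0:ℝ) ≤ 2 * Mb * δ := by positivity
          nlinarith
  calc |cP φ n t ξ s - Psi φ m u s|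
      ≤ |∑ j ∈ range n, φ (ξ j) * (ind j - ell j)| +
        |∑ j ∈ range n, ∑ k ∈ range m, (φ (ξ j) - φ (v k)) * Mjk j k| := by
        rw [split]; exact abs_add_le _ _
    _ ≤ Mb * δ + (ε * (b - a) + 2 * Mb * δ * (2 * (m + 1))) := add_le_add T1 T2
    _ = ε * (b - a) + Mb * δ * (4 * m + 5) := by push_cast; ring

/-- Abel-type summation: a Riemann sum of `φ • f` expressed through increments
of `f` along a refinement containing all the tags. -/
lemma abel_identity {E : Type*} [NormedAddCommGroup E] [NormedSpace ℝ E]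
    {a : ℝ} (f : ℝ → E) (φ : ℝ → ℝ) {n : ℕ} {t ξ : ℕ → ℝ}
    (ht0 : t 0 = a) (htstep : ∀ j < n, t j < t (j+1))
    (htag : ∀ j < n, ξ j ∈ Icc (t j) (t (j+1)))
    {N : ℕ} {s : ℕ → ℝ} (hs0 : s 0 = a) (hsstep : ∀ k < N, s k < s (k+1))
    (hcover : ∀ j < n, ∃ k ≤ N, ξ j = s k) :
    ∑ j ∈ range n, (t (j+1) - t j) • (φ (ξ j) • f (ξ j)) =
      (cP φ n t ξ a) • f a +
        ∑ k ∈ range N, (cP φ n t ξ (s (k+1))) • (f (s (k+1)) - f (s k)) := by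
  classical
  have hξa : ∀ j < n, a ≤ ξ j := fun j hj =>
    le_trans (ht0 ▸ part_mono htstep 0 j (Nat.zero_le j) (le_of_lt hj)) (htag j hj).1
  have hsmono := part_mono hsstep
  have hsstrict := part_strict hsstep
  -- rewrite the second term as a double sum and swap
  have step1 : ∑ k ∈ range N, (cP φ n t ξ (s (k+1))) • (f (s (k+1)) - f (s k))
      = ∑ j ∈ range n, ∑ k ∈ range N,
          (if s (k+1) ≤ ξ j then (φ (ξ j) * (t (j+1) - t j)) • (f (s (k+1)) - f (s k))
           else 0) := by
    rw [Finset.sum_comm]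
    refine Finset.sum_congr rfl fun k _ => ?_
    rw [cP, Finset.sum_smul]
    refine Finset.sum_congr rfl fun j _ => ?_
    split_ifs <;> simp
  have step2 : ∀ j < n, ∑ k ∈ range N,
      (if s (k+1) ≤ ξ j then (φ (ξ j) * (t (j+1) - t j)) • (f (s (k+1)) - f (s k))
       else 0) = (φ (ξ j) * (t (j+1) - t j)) • (f (ξ j) - f a) := by
    intro j hj
    obtain ⟨kj, hkj, hkeq⟩ := hcover j hj
    have hfilter : (range N).filter (fun k => s (k+1) ≤ ξ j) = range kj := by
      ext k
      simp only [Finset.mem_filter, Finset.mem_range]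
      constructor
      · rintro ⟨hkN, hle⟩
        rw [hkeq] at hle
        by_contra hc
        push_neg at hc
        have : s kj ≤ s k := hsmono kj k hc (le_of_lt hkN)
        have : s k < s (k+1) := hsstep k hkN
        linarith
      · intro hlt
        constructor
        · omega
        · rw [hkeq]
          exact hsmono (k+1) kj hlt hkj
    rw [← Finset.sum_filter, hfilter, ← Finset.smul_sum,
      Finset.sum_range_sub (fun k => f (s k)), hs0, ← hkeq]
  calc ∑ j ∈ range n, (t (j+1) - t j) • (φ (ξ j) • f (ξ j))
      = ∑ j ∈ range n, ((φ (ξ j) * (t (j+1) - t j)) • f a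
          + (φ (ξ j) * (t (j+1) - t j)) • (f (ξ j) - f a)) := by
        refine Finset.sum_congr rfl fun j _ => ?_
        rw [smul_smul, ← smul_add, add_sub_cancel, mul_comm]
    _ = (cP φ n t ξ a) • f a +
        ∑ k ∈ range N, (cP φ n t ξ (s (k+1))) • (f (s (k+1)) - f (s k)) := by
        rw [Finset.sum_add_distrib, step1]
        congr 1
        · rw [cP, Finset.sum_smul]
          refine Finset.sum_congr rfl fun j hj => ?_
          rw [if_pos (hξa j (Finset.mem_range.mp hj))]
        · exact Finset.sum_congr rfl fun j hj => (step2 j (Finset.mem_range.mp hj)).symm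

/-- a strictly increasing enumeration of a finite set containing `a` and `b` -/
lemma merged_partition {a b : ℝ} (F : Finset ℝ) (hsub : ∀ x ∈ F, x ∈ Icc a b)
    (ha : a ∈ F) (hb : b ∈ F) :
    ∃ N : ℕ, ∃ s : ℕ → ℝ, s 0 = a ∧ s N = b ∧ (∀ k < N, s k < s (k+1)) ∧
      ∀ x ∈ F, ∃ k ≤ N, x = s k := by
  classical
  set l := F.sort (· ≤ ·) with hl
  have hlen : 0 < l.length := by
    rw [hl, Finset.length_sort]
    exact Finset.card_pos.mpr ⟨a, ha⟩
  set N := l.length - 1 with hN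
  have hsorted : List.Pairwise (· < ·) l := (Finset.sortedLT_sort F).pairwise
  have hmeml : ∀ x, x ∈ l ↔ x ∈ F := fun x => Finset.mem_sort (· ≤ ·)
  refine ⟨N, fun k => l.getD k b, ?_, ?_, ?_, ?_⟩
  · show l.getD 0 b = a
    rw [List.getD_eq_getElem l b hlen]
    have hmem : l[0] ∈ F := (hmeml _).mp (List.getElem_mem hlen)
    have h1 : a ≤ l[0] := (hsub _ hmem).1
    have hal : a ∈ l := (hmeml a).mpr ha
    obtain ⟨i, hi, heq⟩ := List.getElem_of_mem hal
    rcases Nat.eq_zero_or_pos i with rfl | hpos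
    · exact heq
    · have := hsorted.rel_get_of_lt (a := ⟨0, hlen⟩) (b := ⟨i, hi⟩) hpos
      simp only [List.get_eq_getElem] at this
      rw [heq] at this
      linarith
  · show l.getD N b = b
    have hNlt : N < l.length := by omega
    rw [List.getD_eq_getElem l b hNlt]
    have hmem : l[N] ∈ F := (hmeml _).mp (List.getElem_mem hNlt)
    have h1 : l[N] ≤ b := (hsub _ hmem).2
    have hbl : b ∈ l := (hmeml b).mpr hb
    obtain ⟨i, hi, heq⟩ := List.getElem_of_mem hbl
    rcases Nat.lt_or_ge i N with hlt | hge
    · have := hsorted.rel_get_of_lt (a := ⟨i, hi⟩) (b := ⟨N, hNlt⟩) hlt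
      simp only [List.get_eq_getElem] at this
      rw [heq] at this
      linarith
    · have hiN : i = N := by omega
      subst hiN
      exact heq
  · intro k hk
    show l.getD k b < l.getD (k+1) b
    have hk1 : k < l.length := by omega
    have hk2 : k + 1 < l.length := by omega
    rw [List.getD_eq_getElem l b hk1, List.getD_eq_getElem l b hk2]
    have := hsorted.rel_get_of_lt (a := ⟨k, hk1⟩) (b := ⟨k+1, hk2⟩) (by simp)
    simpa using this
  · intro x hx
    have hxl : x ∈ l := (hmeml x).mpr hx
    obtain ⟨i, hi, heq⟩ := List.getElem_of_mem hxl
    have hi' : i < l.length := hi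
    refine ⟨i, by omega, ?_⟩
    show x = l.getD i b
    rw [List.getD_eq_getElem l b hi', heq]

lemma tags_in {a b : ℝ} {n : ℕ} {t ξ : ℕ → ℝ} (ht0 : t 0 = a) (htn : t n = b)
    (htstep : ∀ j < n, t j < t (j+1)) (htag : ∀ j < n, ξ j ∈ Icc (t j) (t (j+1))) :
    ∀ j < n, ξ j ∈ Icc a b := fun j hj =>
  ⟨le_trans (ht0 ▸ part_mono htstep 0 j (Nat.zero_le j) (le_of_lt hj)) (htag j hj).1,
   le_trans (htag j hj).2 (htn ▸ part_mono htstep (j+1) n hj le_rfl)⟩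

/-- Riemann sums of `φ • f` over two fine tagged partitions are close. -/
lemma pair_estimate {E : Type*} [NormedAddCommGroup E] [NormedSpace ℝ E]
    {a b : ℝ} (hab : a < b) (f : ℝ → E)
    (hA : ∀ ε : ℝ, 0 < ε → ∃ δ : ℝ, 0 < δ ∧ ∀ (n : ℕ) (t c : ℕ → ℝ),
      t 0 = a → t n = b → (∀ i < n, t i < t (i + 1)) → (∀ i < n, |c i| ≤ δ) →
      ‖∑ i ∈ Finset.range n, c i • (f (t (i + 1)) - f (t i))‖ < ε)
    (φ : ℝ → ℝ) (hφ : MemDminus a b φ) :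
    ∀ ε : ℝ, 0 < ε → ∃ δ : ℝ, 0 < δ ∧ ∀ (n : ℕ) (t ξ : ℕ → ℝ) (n' : ℕ) (t' ξ' : ℕ → ℝ),
      t 0 = a → t n = b → (∀ i < n, t i < t (i+1)) → (∀ i < n, t (i+1) - t i < δ) →
      (∀ i < n, ξ i ∈ Icc (t i) (t (i+1))) →
      t' 0 = a → t' n' = b → (∀ i < n', t' i < t' (i+1)) → (∀ i < n', t' (i+1) - t' i < δ) →
      (∀ i < n', ξ' i ∈ Icc (t' i) (t' (i+1))) →
      ‖(∑ j ∈ range n, (t (j+1) - t j) • (φ (ξ j) • f (ξ j))) -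
        ∑ j ∈ range n', (t' (j+1) - t' j) • (φ (ξ' j) • f (ξ' j))‖ < ε := by
  classical
  intro ε hε
  obtain ⟨δA, hδA, hAb⟩ := hA (ε/2) (by linarith)
  obtain ⟨Mb, hMb0, hMb⟩ := bounded_of_Dminus hab hφ
  set B : ℝ := ‖f a‖ + 1 with hB
  have hBpos : 0 < B := by positivity
  set η : ℝ := min δA (ε/(4*B)) with hη
  have hηpos : 0 < η := lt_min hδA (by positivity)
  set ε₁ : ℝ := η/(4*(b-a)) with hε₁
  have hε₁pos : 0 < ε₁ := by
    apply div_pos hηpos; linarith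
  obtain ⟨m, u, hm0, hu0, hum, hustep, hosc⟩ := osc_partition hab hφ hε₁pos
  set C : ℝ := Mb * (4*(m:ℝ)+5) with hC
  have hCnn : 0 ≤ C := by positivity
  set δ : ℝ := min 1 (η/(4*(C+1))) with hδdef
  have hδpos : 0 < δ := lt_min one_pos (by positivity)
  have hδC : δ * C ≤ η/4 := by
    have h1 : δ ≤ η/(4*(C+1)) := min_le_right _ _
    have h2 : δ * (4*(C+1)) ≤ η := by
      rw [← le_div_iff₀ (by positivity)]
      exact h1
    nlinarith [hδpos.le]
  refine ⟨δ, hδpos, ?_⟩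
  intro n t ξ n' t' ξ' ht0 htn htstep hmesh htag ht0' htn' htstep' hmesh' htag'
  -- uniform closeness of the two weighted tail sums
  have key : ∀ s₀ : ℝ, |cP φ n t ξ s₀ - cP φ n' t' ξ' s₀| ≤ η := by
    intro s₀
    have h1 := cP_close hε₁pos hMb0 hδpos hMb hu0 hum hustep hosc
      ht0 htn htstep hmesh htag s₀
    have h2 := cP_close hε₁pos hMb0 hδpos hMb hu0 hum hustep hosc
      ht0' htn' htstep' hmesh' htag' s₀
    have htri : |cP φ n t ξ s₀ - cP φ n' t' ξ' s₀|
        ≤ |cP φ n t ξ s₀ - Psi φ m u s₀| + |cP φ n' t' ξ' s₀ - Psi φ m u s₀| := by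
      calc |cP φ n t ξ s₀ - cP φ n' t' ξ' s₀|
          = |(cP φ n t ξ s₀ - Psi φ m u s₀) - (cP φ n' t' ξ' s₀ - Psi φ m u s₀)| := by
            ring_nf
        _ ≤ _ := abs_sub _ _
    have hε₁b : ε₁ * (b - a) = η / 4 := by
      have hba : b - a ≠ 0 := ne_of_gt (by linarith : (0:ℝ) < b - a)
      rw [hε₁]
      field_simp
    have hMδ : Mb * δ * (4*(m:ℝ)+5) ≤ η/4 := by
      have : Mb * δ * (4*(m:ℝ)+5) = δ * C := by rw [hC]; ring
      rw [this]; exact hδC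
    linarith
  -- merged partition containing all tags
  set F : Finset ℝ := insert a (insert b
    ((range n).image ξ ∪ (range n').image ξ')) with hF
  have hsubF : ∀ x ∈ F, x ∈ Icc a b := by
    intro x hx
    rw [hF] at hx
    simp only [Finset.mem_insert, Finset.mem_union, Finset.mem_image,
      Finset.mem_range] at hx
    rcases hx with rfl | rfl | ⟨j, hj, rfl⟩ | ⟨j, hj, rfl⟩
    · exact ⟨le_rfl, le_of_lt hab⟩
    · exact ⟨le_of_lt hab, le_rfl⟩
    · exact tags_in ht0 htn htstep htag j hj
    · exact tags_in ht0' htn' htstep' htag' j hj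
  have haF : a ∈ F := Finset.mem_insert_self a _
  have hbF : b ∈ F := Finset.mem_insert_of_mem (Finset.mem_insert_self b _)
  obtain ⟨N, s, hs0, hsN, hsstep, hcov⟩ := merged_partition F hsubF haF hbF
  have hcov1 : ∀ j < n, ∃ k ≤ N, ξ j = s k := by
    intro j hj
    refine hcov (ξ j) ?_
    rw [hF]
    exact Finset.mem_insert_of_mem (Finset.mem_insert_of_mem
      (Finset.mem_union_left _ (Finset.mem_image.mpr ⟨j, Finset.mem_range.mpr hj, rfl⟩)))
  have hcov2 : ∀ j < n', ∃ k ≤ N, ξ' j = s k := by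
    intro j hj
    refine hcov (ξ' j) ?_
    rw [hF]
    exact Finset.mem_insert_of_mem (Finset.mem_insert_of_mem
      (Finset.mem_union_right _ (Finset.mem_image.mpr ⟨j, Finset.mem_range.mpr hj, rfl⟩)))
  rw [abel_identity f φ ht0 htstep htag hs0 hsstep hcov1,
     abel_identity f φ ht0' htstep' htag' hs0 hsstep hcov2]
  have hre : (cP φ n t ξ a) • f a +
      (∑ k ∈ range N, (cP φ n t ξ (s (k+1))) • (f (s (k+1)) - f (s k))) -
      ((cP φ n' t' ξ' a) • f a +
      ∑ k ∈ range N, (cP φ n' t' ξ' (s (k+1))) • (f (s (k+1)) - f (s k)))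
      = (cP φ n t ξ a - cP φ n' t' ξ' a) • f a +
        ∑ k ∈ range N, (cP φ n t ξ (s (k+1)) - cP φ n' t' ξ' (s (k+1))) •
          (f (s (k+1)) - f (s k)) := by
    rw [sub_smul, Finset.sum_congr rfl (fun k _ => (sub_smul (cP φ n t ξ (s (k+1)))
      (cP φ n' t' ξ' (s (k+1))) (f (s (k+1)) - f (s k)))), Finset.sum_sub_distrib]
    abel
  rw [hre]
  have hterm1 : ‖(cP φ n t ξ a - cP φ n' t' ξ' a) • f a‖ ≤ ε/4 := by
    rw [norm_smul, Real.norm_eq_abs]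
    have h1 : |cP φ n t ξ a - cP φ n' t' ξ' a| ≤ ε/(4*B) :=
      le_trans (key a) (min_le_right _ _)
    have h2 : ‖f a‖ ≤ B := by rw [hB]; linarith
    calc |cP φ n t ξ a - cP φ n' t' ξ' a| * ‖f a‖ ≤ (ε/(4*B)) * B := by
          exact mul_le_mul h1 h2 (norm_nonneg _) (by positivity)
      _ = ε/4 := by field_simp
  have hterm2 : ‖∑ k ∈ range N, (cP φ n t ξ (s (k+1)) - cP φ n' t' ξ' (s (k+1))) •
      (f (s (k+1)) - f (s k))‖ < ε/2 := by
    refine hAb N s (fun k => cP φ n t ξ (s (k+1)) - cP φ n' t' ξ' (s (k+1)))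
      hs0 hsN hsstep ?_
    intro k _
    exact le_trans (key (s (k+1))) (min_le_left _ _)
  calc ‖(cP φ n t ξ a - cP φ n' t' ξ' a) • f a +
        ∑ k ∈ range N, (cP φ n t ξ (s (k+1)) - cP φ n' t' ξ' (s (k+1))) •
          (f (s (k+1)) - f (s k))‖
      ≤ ‖(cP φ n t ξ a - cP φ n' t' ξ' a) • f a‖ +
        ‖∑ k ∈ range N, (cP φ n t ξ (s (k+1)) - cP φ n' t' ξ' (s (k+1))) •
          (f (s (k+1)) - f (s k))‖ := norm_add_le _ _
    _ < ε/4 + ε/2 := by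
        rcases lt_or_eq_of_le hterm1 with h | h
        · linarith
        · linarith
    _ < ε := by linarith

end RIhelp

/-- Lemma A.4: if the semivariation `A(f,δ)` tends to `0` as `δ → 0`, then
`f ∈ 𝓡_m([a,b],E)`: the Riemann integral `∫_a^b φ(t) f(t) dt` exists for every
`φ ∈ D⁻[a,b]`. -/
theorem riemann_integrable_of_semivariation {E : Type*} [NormedAddCommGroup E]
    [NormedSpace ℝ E] [CompleteSpace E]
    {a b : ℝ} (hab : a < b) (f : ℝ → E)
    (hA : ∀ ε : ℝ, 0 < ε → ∃ δ : ℝ, 0 < δ ∧ ∀ (n : ℕ) (t c : ℕ → ℝ),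
      t 0 = a → t n = b → (∀ i < n, t i < t (i + 1)) → (∀ i < n, |c i| ≤ δ) →
      ‖∑ i ∈ Finset.range n, c i • (f (t (i + 1)) - f (t i))‖ < ε) :
    ∀ φ : ℝ → ℝ, MemDminus a b φ →
      ∃ I : E, HasRiemannIntegral (fun t => φ t • f t) a b I := by
  intro φ hφ
  have pair := RIhelp.pair_estimate hab f hA φ hφ
  -- the uniform partitions
  set T : ℕ → ℕ → ℝ := fun N j => a + j * ((b - a)/((N:ℝ)+1)) with hT
  have hTstep : ∀ N j, T N (j+1) - T N j = (b-a)/((N:ℝ)+1) := by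
    intro N j; simp only [hT]; push_cast; ring
  have hT0 : ∀ N, T N 0 = a := by intro N; simp [hT]
  have hTlast : ∀ N, T N (N+1) = b := by
    intro N
    simp only [hT]
    have h1 : ((N:ℝ)+1) ≠ 0 := by positivity
    push_cast
    field_simp
    ring
  have hmeshpos : ∀ N : ℕ, 0 < (b-a)/((N:ℝ)+1) := fun N => by
    have : (0:ℝ) < b - a := by linarith
    positivity
  have hTlt : ∀ N j, T N j < T N (j+1) := by
    intro N j
    have h1 := hTstep N j
    have h2 := hmeshpos N
    rw [← sub_pos, h1]
    exact h2
  set S : ℕ → E := fun N =>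
    ∑ j ∈ Finset.range (N+1), (T N (j+1) - T N j) • (φ (T N j) • f (T N j)) with hS
  have hmesh_small : ∀ δ : ℝ, 0 < δ → ∃ N₀ : ℕ, ∀ N ≥ N₀, (b-a)/((N:ℝ)+1) < δ := by
    intro δ hδ
    obtain ⟨N₀, hN₀⟩ := exists_nat_gt ((b-a)/δ)
    refine ⟨N₀, fun N hN => ?_⟩
    have h2 : (N₀:ℝ) ≤ (N:ℝ) := by exact_mod_cast hN
    have h1 : (b-a)/δ < (N:ℝ)+1 := by linarith
    rw [div_lt_iff₀ (by positivity)]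
    have h3 : b - a < ((N:ℝ)+1) * δ := by
      have := (div_lt_iff₀ hδ).mp h1
      linarith [mul_comm ((N:ℝ)+1) δ]
    linarith [mul_comm ((N:ℝ)+1) δ]
  have hvalid : ∀ N : ℕ, T N 0 = a ∧ T N (N+1) = b ∧ (∀ i < N+1, T N i < T N (i+1)) ∧
      (∀ i < N+1, T N i ∈ Set.Icc (T N i) (T N (i+1))) :=
    fun N => ⟨hT0 N, hTlast N, fun i _ => hTlt N i,
      fun i _ => ⟨le_rfl, le_of_lt (hTlt N i)⟩⟩
  have hcauchy : CauchySeq S := by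
    rw [Metric.cauchySeq_iff]
    intro ε hε
    obtain ⟨δ, hδ, hp⟩ := pair ε hε
    obtain ⟨N₀, hN₀⟩ := hmesh_small δ hδ
    refine ⟨N₀, fun p hp' q hq' => ?_⟩
    rw [dist_eq_norm]
    exact hp (p+1) (T p) (T p) (q+1) (T q) (T q)
      (hvalid p).1 (hvalid p).2.1 (hvalid p).2.2.1
      (fun i _ => by rw [hTstep]; exact hN₀ p hp') (hvalid p).2.2.2
      (hvalid q).1 (hvalid q).2.1 (hvalid q).2.2.1
      (fun i _ => by rw [hTstep]; exact hN₀ q hq') (hvalid q).2.2.2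
  obtain ⟨I, hI⟩ := cauchySeq_tendsto_of_complete hcauchy
  refine ⟨I, ?_⟩
  intro ε hε
  obtain ⟨δ, hδ, hp⟩ := pair (ε/2) (by linarith)
  refine ⟨δ, hδ, ?_⟩
  intro n t ξ _hn h0 hNb hstep hmesh htag
  obtain ⟨N₁, hN₁⟩ := hmesh_small δ hδ
  obtain ⟨N₂, hN₂⟩ := Metric.tendsto_atTop.mp hI (ε/2) (by linarith)
  set N := max N₁ N₂ with hN
  have hd1 : ‖(∑ i ∈ Finset.range n, (t (i+1) - t i) • (φ (ξ i) • f (ξ i))) - S N‖ < ε/2 :=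
    hp n t ξ (N+1) (T N) (T N) h0 hNb hstep hmesh htag
      (hvalid N).1 (hvalid N).2.1 (hvalid N).2.2.1
      (fun i _ => by rw [hTstep]; exact hN₁ N (le_max_left _ _)) (hvalid N).2.2.2
  have hd2 : ‖S N - I‖ < ε/2 := by
    rw [← dist_eq_norm]
    exact hN₂ N (le_max_right _ _)
  show ‖(∑ i ∈ Finset.range n, (t (i+1) - t i) • (φ (ξ i) • f (ξ i))) - I‖ < ε
  calc ‖(∑ i ∈ Finset.range n, (t (i+1) - t i) • (φ (ξ i) • f (ξ i))) - I‖
      = ‖((∑ i ∈ Finset.range n, (t (i+1) - t i) • (φ (ξ i) • f (ξ i))) - S N)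
        + (S N - I)‖ := by rw [sub_add_sub_cancel]
    _ ≤ _ + _ := norm_add_le _ _
    _ < ε/2 + ε/2 := add_lt_add hd1 hd2
    _ = ε := by ring
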